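/- Let G be a connected oriented graph in which all path counts are finite. Then for any vertices u,v: limsup_{n→∞} (1/n) log p_{uv}^G(n) = −log R(G) (so this limsup is independent of u and v), and moreover −log R(G) = sup{ limsup_{n→∞} (1/n) log p_{ww}^H(n) : H a finite subgraph of G, w a vertex of H } (with the convention log 0 = −∞). -/

import Mathlib

open Filter Set
open scoped ENNReal NNReal

/-- An oriented graph: a set of vertices and arrows (at most one arrow `u → v`
for each ordered pair), every arrow joining two vertices of the graph. -/
structure OGraph (V : Type*) where
  verts : Set V
  Adj : V → V → Prop
  mem_of_adj : ∀ ⦃u v⦄, Adj u v → u ∈ verts ∧ v ∈ verts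

namespace OGraph

variable {V W : Type*}

/-- `H` is a subgraph of `G`. -/
def IsSubgraph (H G : OGraph V) : Prop :=
  H.verts ⊆ G.verts ∧ ∀ ⦃u v⦄, H.Adj u v → G.Adj u v

/-- The set of paths `(u_0, …, u_n)` of length `n` from `u` to `v` in `G`. -/
def pathSet (G : OGraph V) (u v : V) (n : ℕ) : Set (Fin (n + 1) → V) :=
  {f | f 0 = u ∧ f (Fin.last n) = v ∧ (∀ i, f i ∈ G.verts) ∧
    ∀ i : Fin n, G.Adj (f i.castSucc) (f i.succ)}

/-- `p_{uv}^G(n)`: the number of paths of length `n` from `u` to `v` in `G`. -/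
noncomputable def pCount (G : OGraph V) (u v : V) (n : ℕ) : ℕ :=
  (G.pathSet u v n).ncard

/-- All path counts of `G` are finite. -/
def FiniteCounts (G : OGraph V) : Prop := ∀ u v n, (G.pathSet u v n).Finite

/-- `G` is (strongly) connected: there is a path between any two vertices. -/
def Connected (G : OGraph V) : Prop :=
  ∀ u ∈ G.verts, ∀ v ∈ G.verts, ∃ n, (G.pathSet u v n).Nonempty

/-- The set of paths `(u_0, …, u_n)` from `u` to `v` avoiding `v` strictly in between. -/
def fpathSet (G : OGraph V) (u v : V) (n : ℕ) : Set (Fin (n + 1) → V) :=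
  {f ∈ G.pathSet u v n | ∀ i : Fin (n + 1), i ≠ 0 → i ≠ Fin.last n → f i ≠ v}

/-- `f_{uv}^G(n)`: the number of paths `(u_0, …, u_n)` with `u_0 = u`, `u_n = v` and
`u_i ≠ v` for `0 < i < n` (set to `0` for `n = 0`). -/
noncomputable def fCount (G : OGraph V) (u v : V) (n : ℕ) : ℕ :=
  if n = 0 then 0 else (G.fpathSet u v n).ncard

/-- The radius of convergence of the power series `∑ a_n zⁿ`. -/
noncomputable def radius (a : ℕ → ℕ) : ℝ≥0∞ :=
  ⨆ (r : ℝ≥0) (_ : ∃ C : ℝ, ∀ n, (a n : ℝ) * (r : ℝ) ^ n ≤ C), (r : ℝ≥0∞)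

/-- `R_{uv}(G)`: the radius of convergence of `∑ p_{uv}^G(n) zⁿ`. -/
noncomputable def pRadius (G : OGraph V) (u v : V) : ℝ≥0∞ := radius (G.pCount u v)

/-- `L_{uv}(G)`: the radius of convergence of `∑_{n ≥ 1} f_{uv}^G(n) zⁿ`. -/
noncomputable def fRadius (G : OGraph V) (u v : V) : ℝ≥0∞ := radius (G.fCount u v)

/-- `R(G)`; for a connected graph it coincides with every `R_{uv}(G)`. -/
noncomputable def gRadius (G : OGraph V) : ℝ≥0∞ :=
  ⨅ u ∈ G.verts, ⨅ v ∈ G.verts, G.pRadius u v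

/-- The Gurevich entropy `h(G) = - log R(G)`. -/
noncomputable def entropy (G : OGraph V) : EReal := - ENNReal.log G.gRadius

/-- The exponential growth rate `limsup (1/n) log a_n` (with `log 0 = -∞`). -/
noncomputable def egrowth (a : ℕ → ℕ) : EReal :=
  Filter.atTop.limsup fun n : ℕ => (((n : ℝ)⁻¹ : ℝ) : EReal) * ENNReal.log ((a n : ℝ≥0∞))

/-- The entropy of a (not necessarily connected) graph:
`sup_{u ∈ V(H)} limsup (1/n) log p_{uu}^H(n)`. -/
noncomputable def supEntropy (G : OGraph V) : EReal :=
  ⨆ u ∈ G.verts, egrowth (G.pCount u u)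

/-- `∑_{n ≥ 1} f_{uu}^G(n) xⁿ`, in `[0, ∞]`. -/
noncomputable def loopSum (G : OGraph V) (u : V) (x : ℝ≥0∞) : ℝ≥0∞ :=
  ∑' n : ℕ, (G.fCount u u n : ℝ≥0∞) * x ^ n

/-- `∑_{n ≥ 1} n f_{uu}^G(n) xⁿ`, in `[0, ∞]`. -/
noncomputable def loopMeanSum (G : OGraph V) (u : V) (x : ℝ≥0∞) : ℝ≥0∞ :=
  ∑' n : ℕ, (n : ℝ≥0∞) * (G.fCount u u n : ℝ≥0∞) * x ^ n

/-- A connected graph is transient if `∑_{n ≥ 1} f_{uu}^G(n) R(G)ⁿ < 1`. -/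
def Transient (G : OGraph V) : Prop := ∀ u ∈ G.verts, G.loopSum u G.gRadius < 1

/-- A connected graph is recurrent if `∑_{n ≥ 1} f_{uu}^G(n) R(G)ⁿ = 1`. -/
def Recurrent (G : OGraph V) : Prop := ∀ u ∈ G.verts, G.loopSum u G.gRadius = 1

/-- Positive recurrent: recurrent and `∑_{n ≥ 1} n f_{uu}^G(n) R(G)ⁿ < ∞`. -/
def PosRecurrent (G : OGraph V) : Prop :=
  G.Recurrent ∧ ∀ u ∈ G.verts, G.loopMeanSum u G.gRadius < ⊤

/-- Null recurrent: recurrent and `∑_{n ≥ 1} n f_{uu}^G(n) R(G)ⁿ = ∞`. -/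
def NullRecurrent (G : OGraph V) : Prop :=
  G.Recurrent ∧ ∀ u ∈ G.verts, G.loopMeanSum u G.gRadius = ⊤

/-- `G` embeds in `H` via `ι` (`G ⊂ H` after identifying `V(G)` with its image). -/
def Embeds (G : OGraph V) (H : OGraph W) (ι : V → W) : Prop :=
  Function.Injective ι ∧ (∀ v ∈ G.verts, ι v ∈ H.verts) ∧
    ∀ ⦃u v⦄, G.Adj u v → H.Adj (ι u) (ι v)

/-- `G` embeds in `H` via `ι` as a proper subgraph (`G ⊊ H`). -/
def ProperEmbeds (G : OGraph V) (H : OGraph W) (ι : V → W) : Prop :=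
  G.Embeds H ι ∧
    ¬ ((∀ w ∈ H.verts, w ∈ ι '' G.verts) ∧ ∀ ⦃a b⦄, H.Adj (ι a) (ι b) → G.Adj a b)

end OGraph



namespace OGraph

open Topology

variable {V : Type*}

lemma ncard_sprod {α β : Type*} (s : Set α) (t : Set β) :
    (s ×ˢ t).ncard = s.ncard * t.ncard := by
  rw [← Nat.card_coe_set_eq, ← Nat.card_coe_set_eq, ← Nat.card_coe_set_eq,
    ← Nat.card_prod]
  exact Nat.card_congr (Equiv.Set.prod s t)

lemma pathSet_adj {G : OGraph V} {u v : V} {k : ℕ} {f : Fin (k+1) → V}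
    (hf : f ∈ G.pathSet u v k) {j : ℕ} (hj : j < k) :
    G.Adj (f ⟨j, by omega⟩) (f ⟨j+1, by omega⟩) :=
  hf.2.2.2 ⟨j, hj⟩

def concatP {m n : ℕ} (fg : (Fin (m+1) → V) × (Fin (n+1) → V)) : Fin (m+n+1) → V :=
  fun i => if h : (i : ℕ) ≤ m then fg.1 ⟨i, by omega⟩
    else fg.2 ⟨(i : ℕ) - m, by have := i.isLt; omega⟩


lemma fin_congr {k : ℕ} (f : Fin k → V) {i j : Fin k} (h : (i : ℕ) = (j : ℕ)) : f i = f j := by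
  congr 1; exact Fin.ext h

lemma pCount_mul_le (G : OGraph V) (hfin : G.FiniteCounts) (u v w : V) (m n : ℕ) :
    G.pCount u v m * G.pCount v w n ≤ G.pCount u w (m + n) := by
  rw [pCount, pCount, pCount, ← ncard_sprod]
  apply Set.ncard_le_ncard_of_injOn concatP ?_ ?_ (hfin u w (m+n))
  · rintro ⟨f, g⟩ ⟨⟨hf0, hfl, hfm, hfa⟩, ⟨hg0, hgl, hgm, hga⟩⟩
    dsimp only at hf0 hfl hfm hfa hg0 hgl hgm hga
    have hFG : f ∈ G.pathSet u v m := ⟨hf0, hfl, hfm, hfa⟩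
    have hGG : g ∈ G.pathSet v w n := ⟨hg0, hgl, hgm, hga⟩
    have hfg : f (Fin.last m) = g 0 := by rw [hfl, hg0]
    refine ⟨?_, ?_, ?_, ?_⟩
    · show concatP (f, g) 0 = u
      rw [concatP]
      rw [dif_pos (show ((0 : Fin (m+n+1)) : ℕ) ≤ m from Nat.zero_le m)]
      exact hf0
    · show concatP (f, g) (Fin.last (m+n)) = w
      rw [concatP]
      rcases Nat.eq_zero_or_pos n with rfl | hn
      · rw [dif_pos (show ((Fin.last (m+0) : Fin (m+0+1)) : ℕ) ≤ m by simp)]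
        dsimp only
        rw [fin_congr f (show ((⟨(Fin.last (m+0) : Fin (m+0+1)) , by simp⟩ : Fin (m+1)) : ℕ)
          = ((Fin.last m : Fin (m+1)) : ℕ) by simp), hfg, ← hgl]
        exact fin_congr g (by simp)
      · rw [dif_neg (show ¬ ((Fin.last (m+n) : Fin (m+n+1)) : ℕ) ≤ m by simp; omega)]
        dsimp only
        rw [← hgl]
        exact fin_congr g (show m + n - m = n by omega)
    · intro i
      show concatP (f, g) i ∈ G.verts
      rw [concatP]
      by_cases h : (i : ℕ) ≤ m
      · rw [dif_pos h]; exact hfm _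
      · rw [dif_neg h]; exact hgm _
    · intro i
      show G.Adj (concatP (f,g) i.castSucc) (concatP (f,g) i.succ)
      have hic : (i.castSucc : ℕ) = (i : ℕ) := rfl
      have his : (i.succ : ℕ) = (i : ℕ) + 1 := rfl
      rcases lt_trichotomy (i : ℕ) m with h | h | h
      · rw [concatP, concatP]
        rw [dif_pos (show ((i.castSucc : Fin (m+n+1)) : ℕ) ≤ m by omega),
          dif_pos (show ((i.succ : Fin (m+n+1)) : ℕ) ≤ m by rw [his]; omega)]
        dsimp only
        have h1 := pathSet_adj hFG (show (i : ℕ) < m from h)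
        rw [fin_congr f (show ((⟨(i.castSucc : Fin (m+n+1)), by omega⟩ : Fin (m+1)) : ℕ)
            = ((⟨(i : ℕ), by omega⟩ : Fin (m+1)) : ℕ) from hic),
          fin_congr f (show ((⟨(i.succ : Fin (m+n+1)), by rw [his]; omega⟩ : Fin (m+1)) : ℕ)
            = ((⟨(i : ℕ)+1, by omega⟩ : Fin (m+1)) : ℕ) from his)]
        exact h1
      · have hn : 0 < n := by have := i.isLt; omega
        rw [concatP, concatP]
        rw [dif_pos (show ((i.castSucc : Fin (m+n+1)) : ℕ) ≤ m by omega),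
          dif_neg (show ¬ ((i.succ : Fin (m+n+1)) : ℕ) ≤ m by rw [his]; omega)]
        dsimp only
        have h1 := pathSet_adj hGG (show 0 < n from hn)
        rw [fin_congr f (show ((⟨(i.castSucc : Fin (m+n+1)), by omega⟩ : Fin (m+1)) : ℕ)
            = ((Fin.last m : Fin (m+1)) : ℕ) from h), hfg,
          fin_congr g (show ((⟨((i.succ : Fin (m+n+1)) : ℕ) - m, by have := i.isLt; omega⟩ : Fin (n+1)) : ℕ)
            = ((⟨1, by omega⟩ : Fin (n+1)) : ℕ) from show (i : ℕ) + 1 - m = 1 by omega)]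
        rw [fin_congr g (show ((⟨0, by omega⟩ : Fin (n+1)) : ℕ) = ((0 : Fin (n+1)) : ℕ) by simp)] at h1
        exact h1
      · rw [concatP, concatP]
        rw [dif_neg (show ¬ ((i.castSucc : Fin (m+n+1)) : ℕ) ≤ m by omega),
          dif_neg (show ¬ ((i.succ : Fin (m+n+1)) : ℕ) ≤ m by rw [his]; omega)]
        dsimp only
        have hlt : (i:ℕ) - m < n := by have := i.isLt; omega
        have h1 := pathSet_adj hGG hlt
        rw [fin_congr g (show ((⟨((i.castSucc : Fin (m+n+1)) : ℕ) - m, by have := i.isLt; omega⟩ : Fin (n+1)) : ℕ)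
            = ((⟨(i:ℕ) - m, by omega⟩ : Fin (n+1)) : ℕ) from rfl),
          fin_congr g (show ((⟨((i.succ : Fin (m+n+1)) : ℕ) - m, by have := i.isLt; omega⟩ : Fin (n+1)) : ℕ)
            = ((⟨((i:ℕ) - m) + 1, by omega⟩ : Fin (n+1)) : ℕ) from
              show (i : ℕ) + 1 - m = (i:ℕ) - m + 1 by omega)]
        exact h1
  · rintro ⟨f, g⟩ ⟨⟨hf0, hfl, hfm, hfa⟩, ⟨hg0, hgl, hgm, hga⟩⟩
      ⟨f', g'⟩ ⟨⟨hf0', hfl', hfm', hfa'⟩, ⟨hg0', hgl', hgm', hga'⟩⟩ heq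
    dsimp only at hf0 hfl hfm hfa hg0 hgl hgm hga hf0' hfl' hfm' hfa' hg0' hgl' hgm' hga' heq
    have happ : ∀ i : Fin (m+n+1), concatP (f,g) i = concatP (f',g') i :=
      fun i => congrFun heq i
    have hf : f = f' := by
      funext i
      have hle : ((⟨(i:ℕ), by have := i.isLt; omega⟩ : Fin (m+n+1)) : ℕ) ≤ m := by
        have := i.isLt; simp; omega
      have := happ ⟨(i:ℕ), by have := i.isLt; omega⟩
      rw [concatP, concatP, dif_pos hle, dif_pos hle] at this
      dsimp only at this
      rw [fin_congr f (show ((⟨_, by omega⟩ : Fin (m+1)) : ℕ) = (i : ℕ) from rfl),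
        fin_congr f' (show ((⟨_, by omega⟩ : Fin (m+1)) : ℕ) = (i : ℕ) from rfl)] at this
      exact this
    have hg : g = g' := by
      funext j
      rcases Nat.eq_zero_or_pos (j : ℕ) with hj | hj
      · have hj0 : j = 0 := by ext; simp [hj]
        rw [hj0, hg0, hg0']
      · have hnle : ¬ ((⟨m + (j:ℕ), by have := j.isLt; omega⟩ : Fin (m+n+1)) : ℕ) ≤ m := by
          show ¬ m + (j:ℕ) ≤ m; omega
        have := happ ⟨m + (j:ℕ), by have := j.isLt; omega⟩
        rw [concatP, concatP, dif_neg hnle, dif_neg hnle] at this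
        dsimp only at this
        rw [fin_congr g (show ((⟨_, _⟩ : Fin (n+1)) : ℕ) = (j : ℕ) by simp),
          fin_congr g' (show ((⟨_, _⟩ : Fin (n+1)) : ℕ) = (j : ℕ) by simp)] at this
        exact this
    rw [hf, hg]


lemma log_natCast (k : ℕ) (hk : k ≠ 0) :
    ENNReal.log (k : ℝ≥0∞) = ((Real.log k : ℝ) : EReal) := by
  rw [← ENNReal.ofReal_natCast, ENNReal.log_ofReal_of_pos (by positivity)]

lemma radius_le_radius_of_le {a b : ℕ → ℕ} (k : ℕ) (h : ∀ n, a n ≤ b (n + k)) :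
    radius b ≤ radius a := by
  refine iSup₂_le fun r hr => ?_
  obtain ⟨C, hC⟩ := hr
  refine le_iSup₂_of_le r ?_ le_rfl
  rcases eq_or_ne r 0 with rfl | hr0
  · refine ⟨(a 0 : ℝ), fun n => ?_⟩
    cases n with
    | zero => simp
    | succ m => simp [pow_succ]
  · have hrpos : (0:ℝ) < (r:ℝ) := by positivity
    refine ⟨C / (r:ℝ)^k, fun n => ?_⟩
    rw [le_div_iff₀ (by positivity)]
    calc (a n : ℝ) * (r:ℝ)^n * (r:ℝ)^k = (a n : ℝ) * (r:ℝ)^(n+k) := by ring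
    _ ≤ (b (n+k) : ℝ) * (r:ℝ)^(n+k) := by
        gcongr
        exact_mod_cast h n
    _ ≤ C := hC (n+k)

lemma term_bot {a : ℕ → ℕ} {n : ℕ} (hn : 1 ≤ n) (h : a n = 0) :
    (((n : ℝ)⁻¹ : ℝ) : EReal) * ENNReal.log ((a n : ℝ≥0∞)) = ⊥ := by
  rw [h]
  simp only [Nat.cast_zero, ENNReal.log_zero]
  exact EReal.coe_mul_bot_of_pos (by positivity)

lemma term_real {a : ℕ → ℕ} {n : ℕ} (h : a n ≠ 0) :
    (((n : ℝ)⁻¹ : ℝ) : EReal) * ENNReal.log ((a n : ℝ≥0∞))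
      = (((n : ℝ)⁻¹ * Real.log (a n) : ℝ) : EReal) := by
  rw [log_natCast _ h, ← EReal.coe_mul]

lemma neg_log_radius_le (a : ℕ → ℕ) : - ENNReal.log (radius a) ≤ egrowth a := by
  rw [← EReal.le_of_forall_lt_iff_le]
  intro t ht
  have hev : ∀ᶠ n : ℕ in atTop, (((n : ℝ)⁻¹ : ℝ) : EReal) * ENNReal.log ((a n : ℝ≥0∞)) < (t : EReal) :=
    Filter.eventually_lt_of_limsup_lt ht
  obtain ⟨N, hN⟩ := (hev.and (Filter.eventually_ge_atTop 1)).exists_forall_of_atTop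
  set r : ℝ≥0 := ⟨Real.exp (-t), (Real.exp_pos _).le⟩ with hr
  have hrc : (r : ℝ) = Real.exp (-t) := rfl
  have key : ∀ n, N ≤ n → (a n : ℝ) * (r:ℝ)^n ≤ 1 := by
    intro n hn
    obtain ⟨h1, h2⟩ := hN n hn
    rcases eq_or_ne (a n) 0 with h0 | h0
    · simp [h0]
    · rw [term_real h0] at h1
      have h1' : (n : ℝ)⁻¹ * Real.log (a n) < t := by exact_mod_cast h1
      have hnpos : (0:ℝ) < n := by exact_mod_cast h2
      have hlog : Real.log (a n) < n * t := by
        rw [inv_mul_lt_iff₀ hnpos] at h1'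
        exact h1'
      have hapos : (0:ℝ) < (a n : ℝ) := by positivity
      have hlt : (a n : ℝ) < Real.exp (n * t) := (Real.log_lt_iff_lt_exp hapos).1 hlog
      have hrn : (r:ℝ)^n = (Real.exp (n * t))⁻¹ := by
        rw [hrc, ← Real.exp_nat_mul, ← Real.exp_neg]
        ring_nf
      rw [hrn, mul_inv_le_iff₀ (Real.exp_pos _), one_mul]
      exact hlt.le
  have hadm : ∃ C : ℝ, ∀ n, (a n : ℝ) * (r:ℝ)^n ≤ C := by
    refine ⟨1 + ∑ i ∈ Finset.range N, (a i : ℝ) * (r:ℝ)^i, fun n => ?_⟩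
    rcases lt_or_ge n N with h | h
    · have : (a n : ℝ) * (r:ℝ)^n ≤ ∑ i ∈ Finset.range N, (a i : ℝ) * (r:ℝ)^i :=
        Finset.single_le_sum (f := fun i => (a i : ℝ) * (r:ℝ)^i)
          (fun i _ => by positivity) (Finset.mem_range.2 h)
      linarith
    · have hsum : (0:ℝ) ≤ ∑ i ∈ Finset.range N, (a i : ℝ) * (r:ℝ)^i :=
        Finset.sum_nonneg fun i _ => by positivity
      have := key n h
      linarith
  have hle : (r : ℝ≥0∞) ≤ radius a := le_iSup₂_of_le r hadm le_rfl
  have hrne : r ≠ 0 := by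
    rw [← NNReal.coe_ne_zero, hrc]
    positivity
  have hlog : ((-t : ℝ) : EReal) ≤ ENNReal.log (radius a) := by
    calc ((-t : ℝ) : EReal) = ENNReal.log (r : ℝ≥0∞) := by
          rw [ENNReal.log_of_nnreal hrne, hrc, Real.log_exp]
    _ ≤ _ := ENNReal.log_monotone hle
  have hfin : - ENNReal.log (radius a) ≤ - ((-t : ℝ) : EReal) := EReal.neg_le_neg_iff.2 hlog
  rwa [← EReal.coe_neg, neg_neg] at hfin

lemma egrowth_le_neg_log (a : ℕ → ℕ) {r : ℝ≥0}
    (hadm : ∃ C : ℝ, ∀ n, (a n : ℝ) * (r : ℝ) ^ n ≤ C) :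
    egrowth a ≤ - ENNReal.log (r : ℝ≥0∞) := by
  rcases eq_or_ne r 0 with rfl | hr0
  · simp only [ENNReal.coe_zero, ENNReal.log_zero]
    rw [show -(⊥ : EReal) = ⊤ from rfl]
    exact le_top
  have hrpos : (0:ℝ) < (r:ℝ) := by positivity
  obtain ⟨C, hC⟩ := hadm
  set C' : ℝ := max C 1 with hC'
  have hC'1 : (1:ℝ) ≤ C' := le_max_right _ _
  have hC'pos : (0:ℝ) < C' := lt_of_lt_of_le one_pos hC'1
  have hbound : ∀ n, (a n : ℝ) * (r:ℝ)^n ≤ C' := fun n => (hC n).trans (le_max_left _ _)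
  set s : ℝ := - Real.log r with hs
  -- the comparison sequence
  have hF : ∀ᶠ n : ℕ in atTop,
      (((n : ℝ)⁻¹ : ℝ) : EReal) * ENNReal.log ((a n : ℝ≥0∞))
        ≤ ((Real.log C' / n + s : ℝ) : EReal) := by
    filter_upwards [Filter.eventually_ge_atTop 1] with n hn
    have hnpos : (0:ℝ) < n := by exact_mod_cast hn
    rcases eq_or_ne (a n) 0 with h0 | h0
    · rw [term_bot hn h0]
      exact bot_le
    · rw [term_real h0]
      apply EReal.coe_le_coe_iff.2
      have hapos : (0:ℝ) < (a n : ℝ) := by positivity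
      have hlog : Real.log (a n) + n * Real.log r ≤ Real.log C' := by
        have h1 : Real.log ((a n : ℝ) * (r:ℝ)^n) ≤ Real.log C' :=
          Real.log_le_log (by positivity) (hbound n)
        rwa [Real.log_mul (ne_of_gt hapos) (by positivity), Real.log_pow] at h1
      have h2 : (n:ℝ)⁻¹ * Real.log (a n) ≤ (n:ℝ)⁻¹ * (Real.log C' + n * s) := by
        apply mul_le_mul_of_nonneg_left _ (by positivity)
        rw [hs]; linarith
      calc (n:ℝ)⁻¹ * Real.log (a n) ≤ (n:ℝ)⁻¹ * (Real.log C' + n * s) := h2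
      _ = Real.log C' / n + s := by field_simp
  have htend : Filter.Tendsto (fun n : ℕ => ((Real.log C' / n + s : ℝ) : EReal))
      atTop (𝓝 ((s : ℝ) : EReal)) := by
    rw [EReal.tendsto_coe]
    have := (tendsto_const_div_atTop_nhds_zero_nat (Real.log C')).add_const s
    simpa using this
  have hlim : Filter.limsup (fun n : ℕ => ((Real.log C' / n + s : ℝ) : EReal)) atTop
      = ((s : ℝ) : EReal) := htend.limsup_eq
  have : egrowth a ≤ ((s : ℝ) : EReal) := by
    rw [← hlim]
    exact Filter.limsup_le_limsup hF
  calc egrowth a ≤ ((s : ℝ) : EReal) := this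
  _ = - ENNReal.log (r : ℝ≥0∞) := by
      rw [ENNReal.log_of_nnreal hr0, hs, ← EReal.coe_neg]

lemma egrowth_eq_neg_log_radius (a : ℕ → ℕ) :
    egrowth a = - ENNReal.log (radius a) := by
  refine le_antisymm ?_ (neg_log_radius_le a)
  refine EReal.le_neg_of_le_neg ?_
  have hrad : radius a ≤ EReal.exp (- egrowth a) := by
    refine iSup₂_le fun r hr => ?_
    have h1 : egrowth a ≤ - ENNReal.log (r : ℝ≥0∞) := egrowth_le_neg_log a hr
    have h2 : ENNReal.log (r : ℝ≥0∞) ≤ - egrowth a := EReal.le_neg_of_le_neg h1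
    calc (r : ℝ≥0∞) = EReal.exp (ENNReal.log (r : ℝ≥0∞)) := (ENNReal.exp_log _).symm
    _ ≤ EReal.exp (- egrowth a) := EReal.exp_monotone h2
  calc ENNReal.log (radius a) ≤ ENNReal.log (EReal.exp (- egrowth a)) :=
        ENNReal.log_monotone hrad
  _ = - egrowth a := EReal.log_exp _

lemma term_le_neg_log_radius {p : ℕ → ℕ} (hsm : ∀ m n, p m * p n ≤ p (m + n))
    {n : ℕ} (hn : 1 ≤ n) :
    (((n : ℝ)⁻¹ : ℝ) : EReal) * ENNReal.log ((p n : ℝ≥0∞)) ≤ - ENNReal.log (radius p) := by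
  rcases eq_or_ne (p n) 0 with h0 | h0
  · rw [term_bot hn h0]; exact bot_le
  have hp1 : (1:ℝ) ≤ (p n : ℝ) := by exact_mod_cast Nat.one_le_iff_ne_zero.2 h0
  refine EReal.le_neg_of_le_neg ?_
  -- show log (radius p) ≤ -((1/n) log p n), via radius ≤ exp of that
  have hrad : radius p ≤ EReal.exp (- ((((n : ℝ)⁻¹ : ℝ) : EReal) * ENNReal.log ((p n : ℝ≥0∞)))) := by
    refine iSup₂_le fun r hr => ?_
    obtain ⟨C, hC⟩ := hr
    rcases eq_or_ne r 0 with rfl | hr0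
    · simp
    have hrpos : (0:ℝ) < (r:ℝ) := by positivity
    -- key : p n * r^n ≤ 1
    have key : (p n : ℝ) * (r:ℝ)^n ≤ 1 := by
      by_contra hgt
      push_neg at hgt
      have hpow : ∀ k : ℕ, p n ^ (k+1) ≤ p (n * (k+1)) := by
        intro k
        induction k with
        | zero => simp
        | succ j ih =>
          calc p n ^ (j+1+1) = p n ^ (j+1) * p n := by ring
          _ ≤ p (n * (j+1)) * p n := Nat.mul_le_mul_right _ ih
          _ ≤ p (n * (j+1) + n) := hsm _ _
          _ = p (n * (j+1+1)) := by ring_nf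
      have hk : ∀ k : ℕ, ((p n : ℝ) * (r:ℝ)^n)^(k+1) ≤ max C 1 := by
        intro k
        calc ((p n : ℝ) * (r:ℝ)^n)^(k+1) = (p n : ℝ)^(k+1) * (r:ℝ)^(n*(k+1)) := by
              rw [mul_pow, ← pow_mul]
        _ ≤ (p (n*(k+1)) : ℝ) * (r:ℝ)^(n*(k+1)) := by
              gcongr
              exact_mod_cast hpow k
        _ ≤ C := hC (n*(k+1))
        _ ≤ max C 1 := le_max_left _ _
      obtain ⟨k, hk'⟩ := pow_unbounded_of_one_lt (max C 1) hgt
      have hmono : ((p n : ℝ) * (r:ℝ)^n)^k ≤ ((p n : ℝ) * (r:ℝ)^n)^(k+1) :=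
        pow_le_pow_right₀ hgt.le (Nat.le_succ k)
      exact absurd ((hmono.trans (hk k))) (not_le.2 hk')
    -- conclude r ≤ exp(-(1/n) log p n)
    have hlogr : Real.log r ≤ -((n:ℝ)⁻¹ * Real.log (p n)) := by
      have hnpos : (0:ℝ) < n := by exact_mod_cast hn
      have h1 : Real.log (p n) + n * Real.log r ≤ 0 := by
        have := Real.log_le_log (by positivity) key
        rwa [Real.log_mul (by positivity) (by positivity), Real.log_pow, Real.log_one] at this
      have h3 : (n:ℝ) * Real.log r ≤ -Real.log (p n) := by linarith
      calc Real.log r = (n:ℝ)⁻¹ * ((n:ℝ) * Real.log r) := by field_simp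
      _ ≤ (n:ℝ)⁻¹ * (-Real.log (p n)) := mul_le_mul_of_nonneg_left h3 (by positivity)
      _ = -((n:ℝ)⁻¹ * Real.log (p n)) := by ring
    calc (r : ℝ≥0∞) = EReal.exp (ENNReal.log (r : ℝ≥0∞)) := (ENNReal.exp_log _).symm
    _ ≤ _ := by
        apply EReal.exp_monotone
        rw [ENNReal.log_of_nnreal hr0, term_real h0, ← EReal.coe_neg]
        exact EReal.coe_le_coe_iff.2 hlogr
  calc ENNReal.log (radius p) ≤ _ := ENNReal.log_monotone hrad
  _ = _ := EReal.log_exp _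


lemma pathSet_subset {H G : OGraph V} (hs : H.IsSubgraph G) (u v : V) (n : ℕ) :
    H.pathSet u v n ⊆ G.pathSet u v n := by
  rintro f ⟨h0, hl, hm, ha⟩
  exact ⟨h0, hl, fun i => hs.1 (hm i), fun i => hs.2 (ha i)⟩

lemma pCount_le_of_subgraph {H G : OGraph V} (hs : H.IsSubgraph G) (hfin : G.FiniteCounts)
    (u v : V) (n : ℕ) : H.pCount u v n ≤ G.pCount u v n :=
  Set.ncard_le_ncard (pathSet_subset hs u v n) (hfin u v n)

lemma finiteCounts_of_finite {H : OGraph V} (h : H.verts.Finite) : H.FiniteCounts := by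
  intro u v n
  have hsub : H.pathSet u v n ⊆ Set.pi Set.univ (fun _ : Fin (n+1) => H.verts) := by
    rintro f ⟨_, _, hm, _⟩ i _
    exact hm i
  exact (Set.Finite.pi (fun _ => h)).subset hsub

end OGraph

/-- For a connected graph, `limsup (1/n) log p_{uv}^G(n) = - log R(G)` for all
vertices `u, v`, and this value is the supremum, over finite subgraphs `H` and vertices `w` of
`H`, of `limsup (1/n) log p_{ww}^H(n)`. -/
theorem gurevich_entropy_eq {V : Type*} [Countable V] (G : OGraph V)
    (hconn : G.Connected) (hfin : G.FiniteCounts) :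
    (∀ u ∈ G.verts, ∀ v ∈ G.verts,
        OGraph.egrowth (G.pCount u v) = - ENNReal.log G.gRadius) ∧
      - ENNReal.log G.gRadius =
        ⨆ (H : OGraph V) (_ : H.IsSubgraph G) (_ : H.verts.Finite) (w : V) (_ : w ∈ H.verts),
          OGraph.egrowth (H.pCount w w) := by
  classical
  have hle : ∀ u ∈ G.verts, ∀ v ∈ G.verts, ∀ u' ∈ G.verts, ∀ v' ∈ G.verts,
      OGraph.radius (G.pCount u' v') ≤ OGraph.radius (G.pCount u v) := by
    intro u hu v hv u' hu' v' hv'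
    obtain ⟨k, hk⟩ := hconn u' hu' u hu
    obtain ⟨l, hl⟩ := hconn v hv v' hv'
    apply OGraph.radius_le_radius_of_le (k + l)
    intro n
    have h1 : 1 ≤ G.pCount u' u k := (Set.ncard_pos (hfin u' u k)).2 hk
    have h2 : 1 ≤ G.pCount v v' l := (Set.ncard_pos (hfin v v' l)).2 hl
    calc G.pCount u v n = 1 * G.pCount u v n * 1 := by ring
    _ ≤ G.pCount u' u k * G.pCount u v n * G.pCount v v' l :=
        Nat.mul_le_mul (Nat.mul_le_mul h1 le_rfl) h2
    _ ≤ G.pCount u' v (k + n) * G.pCount v v' l :=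
        Nat.mul_le_mul_right _ (OGraph.pCount_mul_le G hfin u' u v k n)
    _ ≤ G.pCount u' v' (k + n + l) := OGraph.pCount_mul_le G hfin u' v v' (k+n) l
    _ = G.pCount u' v' (n + (k + l)) := by congr 1; omega
  have hrad : ∀ u ∈ G.verts, ∀ v ∈ G.verts, G.gRadius = OGraph.radius (G.pCount u v) := by
    intro u hu v hv
    refine le_antisymm ?_ ?_
    · exact (iInf₂_le u hu).trans (iInf₂_le v hv)
    · exact le_iInf₂ fun u' hu' => le_iInf₂ fun v' hv' => hle u' hu' v' hv' u hu v hv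
  constructor
  · intro u hu v hv
    rw [OGraph.egrowth_eq_neg_log_radius, hrad u hu v hv]
  · refine le_antisymm ?_ ?_
    · rcases Set.eq_empty_or_nonempty G.verts with hemp | ⟨u, hu⟩
      · have htop : G.gRadius = ⊤ := by
          rw [OGraph.gRadius]
          simp [hemp]
        rw [htop]
        simp only [ENNReal.log_top]
        rw [show -(⊤:EReal) = ⊥ from rfl]
        exact bot_le
      · rw [hrad u hu u hu, ← OGraph.egrowth_eq_neg_log_radius, OGraph.egrowth]
        refine Filter.limsup_le_of_le (by isBoundedDefault) ?_
        filter_upwards [Filter.eventually_ge_atTop 1] with n hn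
        rcases eq_or_ne (G.pCount u u n) 0 with h0 | h0
        · rw [OGraph.term_bot hn h0]
          exact bot_le
        · set S : Set V := {u} ∪ ⋃ f ∈ G.pathSet u u n, Set.range f with hS
          have hSfin : S.Finite := (Set.finite_singleton u).union
            ((hfin u u n).biUnion fun f _ => Set.finite_range f)
          have hSsub : S ⊆ G.verts := by
            rintro x hx
            rcases hx with hx | hx
            · rw [Set.mem_singleton_iff] at hx
              subst hx
              exact hu
            · rw [Set.mem_iUnion₂] at hx
              obtain ⟨f, hf, hx⟩ := hx
              obtain ⟨i, rfl⟩ := hx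
              exact hf.2.2.1 i
          set H : OGraph V := ⟨S, fun a b => G.Adj a b ∧ a ∈ S ∧ b ∈ S,
            fun a b h => ⟨h.2.1, h.2.2⟩⟩ with hH
          have hsubH : H.IsSubgraph G := ⟨hSsub, fun a b h => h.1⟩
          have huH : u ∈ H.verts := Or.inl rfl
          have hpath : H.pathSet u u n = G.pathSet u u n := by
            apply Set.Subset.antisymm (OGraph.pathSet_subset hsubH u u n)
            rintro f ⟨h0', hl', hm', ha'⟩
            have hmem : ∀ i, f i ∈ S := fun i =>
              Or.inr (Set.mem_biUnion ⟨h0', hl', hm', ha'⟩ (Set.mem_range_self i))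
            exact ⟨h0', hl', hmem, fun i => ⟨ha' i, hmem _, hmem _⟩⟩
          have hcnt : H.pCount u u n = G.pCount u u n := by
            rw [OGraph.pCount, OGraph.pCount, hpath]
          have hsm : ∀ a b : ℕ, H.pCount u u a * H.pCount u u b ≤ H.pCount u u (a+b) :=
            fun a b => OGraph.pCount_mul_le H (OGraph.finiteCounts_of_finite hSfin) u u u a b
          calc (((n : ℝ)⁻¹ : ℝ) : EReal) * ENNReal.log ((G.pCount u u n : ℝ≥0∞))
              = (((n : ℝ)⁻¹ : ℝ) : EReal) * ENNReal.log ((H.pCount u u n : ℝ≥0∞)) := by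
                rw [hcnt]
          _ ≤ - ENNReal.log (OGraph.radius (H.pCount u u)) :=
                OGraph.term_le_neg_log_radius hsm hn
          _ = OGraph.egrowth (H.pCount u u) := (OGraph.egrowth_eq_neg_log_radius _).symm
          _ ≤ _ := by
                apply le_iSup_of_le H
                apply le_iSup_of_le hsubH
                apply le_iSup_of_le hSfin
                apply le_iSup_of_le u
                apply le_iSup_of_le huH
                exact le_rfl
    · refine iSup_le fun H => iSup_le fun hsub => iSup_le fun hHfin => iSup_le fun w =>
        iSup_le fun hw => ?_
      rw [OGraph.egrowth_eq_neg_log_radius]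
      refine EReal.neg_le_neg_iff.2 (ENNReal.log_monotone ?_)
      calc G.gRadius = OGraph.radius (G.pCount w w) := hrad w (hsub.1 hw) w (hsub.1 hw)
      _ ≤ OGraph.radius (H.pCount w w) := OGraph.radius_le_radius_of_le 0
            (fun n => by simpa using OGraph.pCount_le_of_subgraph hsub hfin w w n)
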